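/- Let D be a discrete space of infinite cardinality κ, and let I be an ideal on ℕ. If I is a Baire ideal for the product space D^ℕ, then the following tree property holds: for every monotone map f : D^{<ℕ} → P(I) (s ⊑ t implies f(s) ⊆ f(t)) such that for every finite sequence s, (i) f(s) is downward closed in I (hereditary), and (ii) ⋃_{t ⊒ s} f(t) = I, there exists σ ∈ D^ℕ with ⋃_{k ∈ ℕ} f(σ|_k) = I. -/

import Mathlib

open scoped ENNReal Cardinal

/-- An ideal on ℕ containing all finite sets, closed under subsets and finite
unions, with `ℕ ∉ I`. -/
def IsIdealOn (I : Set (Set ℕ)) : Prop :=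
  Set.univ ∉ I ∧ (∀ A ∈ I, ∀ B, B ⊆ A → B ∈ I) ∧
    (∀ A ∈ I, ∀ B ∈ I, A ∪ B ∈ I) ∧ (∀ A : Set ℕ, A.Finite → A ∈ I)

/-- `β` is a basis of the ideal `I`: a cofinal (under inclusion) subfamily. -/
def IsIdealBasis (I β : Set (Set ℕ)) : Prop := β ⊆ I ∧ ∀ A ∈ I, ∃ B ∈ β, A ⊆ B

/-- `I` is a Baire ideal for the topological space `X`: for every monotone family of
nowhere dense subsets of `X` indexed by `I`, the union is not all of `X`. -/
def IsBaireIdealFor (I : Set (Set ℕ)) (X : Type*) [TopologicalSpace X] : Prop :=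
  ∀ f : Set ℕ → Set X, (∀ A ∈ I, IsNowhereDense (f A)) →
    (∀ A ∈ I, ∀ B ∈ I, A ⊆ B → f A ⊆ f B) → (⋃ A ∈ I, f A) ≠ Set.univ

/-- If `I` is a Baire ideal for `D^ℕ` (`D` discrete infinite), then the tree property (3)
holds: every monotone, hereditary, cofinally covering map `f : D^{<ℕ} → 𝒫(I)` admits a
branch `σ` along which the `f (σ|k)` exhaust `I`. -/
theorem stmt_5 (D : Type) [TopologicalSpace D] [DiscreteTopology D] [Infinite D]
    (I : Set (Set ℕ)) (hI : IsIdealOn I)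
    (hBaire : IsBaireIdealFor I (ℕ → D))
    (f : List D → Set (Set ℕ))
    (hmono : ∀ s t : List D, s <+: t → f s ⊆ f t)
    (hsub : ∀ s : List D, f s ⊆ I)
    (hher : ∀ s : List D, ∀ A ∈ f s, ∀ B : Set ℕ, B ⊆ A → B ∈ f s)
    (hcov : ∀ s : List D, (⋃ t ∈ {t : List D | s <+: t}, f t) = I) :
    ∃ σ : ℕ → D, (⋃ k : ℕ, f (List.ofFn fun i : Fin k => σ i)) = I := by
  classical
  by_contra hcon
  push_neg at hcon
  -- initial segment
  let seg : (ℕ → D) → ℕ → List D := fun σ k => List.ofFn fun i : Fin k => σ i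
  -- cylinders are open
  have cylopen : ∀ (σ : ℕ → D) (n : ℕ), IsOpen {τ : ℕ → D | ∀ i < n, τ i = σ i} := by
    intro σ n
    have he : {τ : ℕ → D | ∀ i < n, τ i = σ i}
        = ⋂ i : Fin n, (fun τ : ℕ → D => τ i) ⁻¹' {σ i} := by
      ext τ
      simp only [Set.mem_setOf_eq, Set.mem_iInter, Set.mem_preimage, Set.mem_singleton_iff]
      exact ⟨fun h i => h i i.2, fun h i hi => h ⟨i, hi⟩⟩
    rw [he]
    exact isOpen_iInter_of_finite fun i =>
      (continuous_apply (i : ℕ)).isOpen_preimage _ (isOpen_discrete _)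
  have segeq : ∀ (σ τ : ℕ → D) (n : ℕ), (∀ i < n, τ i = σ i) → seg τ n = seg σ n := by
    intro σ τ n h
    simp only [seg]
    congr 1
    funext i
    exact h i i.2
  -- the nowhere dense family
  let g : Set ℕ → Set (ℕ → D) := fun A => {σ | ∀ k, A ∉ f (seg σ k)}
  have hclosed : ∀ A, IsClosed (g A) := by
    intro A
    rw [← isOpen_compl_iff]
    have : (g A)ᶜ = {σ : ℕ → D | ∃ k, A ∈ f (seg σ k)} := by
      ext σ; simp [g]
    rw [this]
    rw [isOpen_iff_mem_nhds]
    rintro σ ⟨k, hk⟩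
    refine Filter.mem_of_superset ((cylopen σ k).mem_nhds (by simp)) ?_
    intro τ hτ
    exact ⟨k, by rw [segeq σ τ k hτ]; exact hk⟩
  have hNWD : ∀ A ∈ I, IsNowhereDense (g A) := by
    intro A hA
    unfold IsNowhereDense
    rw [(hclosed A).closure_eq]
    rw [Set.eq_empty_iff_forall_notMem]
    intro σ hσ
    obtain ⟨F, u, hu, hFu⟩ := isOpen_pi_iff.mp isOpen_interior σ hσ
    set n : ℕ := F.sup id + 1 with hn
    have hFn : ∀ a ∈ F, a < n := fun a ha =>
      Nat.lt_succ_of_le (Finset.le_sup (f := id) ha)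
    -- find an extension t of seg σ n with A ∈ f t
    have hAmem : A ∈ ⋃ t ∈ {t : List D | seg σ n <+: t}, f t := by
      rw [hcov (seg σ n)]; exact hA
    simp only [Set.mem_iUnion, Set.mem_setOf_eq] at hAmem
    obtain ⟨t, ht, hAt⟩ := hAmem
    have hlen : n ≤ t.length := by
      have := ht.length_le
      simp [seg] at this; omega
    let τ : ℕ → D := fun i => if h : i < t.length then t[i] else σ i
    have hτσ : ∀ i < n, τ i = σ i := by
      intro i hi
      have hil : i < t.length := lt_of_lt_of_le hi hlen
      have hseg : i < (seg σ n).length := by simp [seg]; omega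
      have : t[i] = (seg σ n)[i]'hseg := (List.IsPrefix.getElem ht hseg).symm
      simp only [τ, dif_pos hil, this, seg, List.getElem_ofFn]
    have hτcyl : τ ∈ (F : Set ℕ).pi u := by
      intro a ha
      rw [hτσ a (hFn a ha)]
      exact (hu a ha).2
    have hτg : τ ∈ g A := interior_subset (hFu hτcyl)
    have hsegt : seg τ t.length = t := by
      have : (fun i : Fin t.length => τ i) = fun i : Fin t.length => t[(i : ℕ)] := by
        funext i
        simp [τ, i.2]
      simp only [seg, this]
      exact List.ofFn_getElem
    exact hτg t.length (by rw [hsegt]; exact hAt)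
  have hgmono : ∀ A ∈ I, ∀ B ∈ I, A ⊆ B → g A ⊆ g B := by
    intro A _ B _ hAB σ hσ k hB
    exact hσ k (hher _ B hB A hAB)
  have hcover : (⋃ A ∈ I, g A) = Set.univ := by
    rw [Set.eq_univ_iff_forall]
    intro σ
    have hne : (⋃ k : ℕ, f (seg σ k)) ≠ I := hcon σ
    have hss : (⋃ k : ℕ, f (seg σ k)) ⊆ I := Set.iUnion_subset fun k => hsub _
    obtain ⟨A, hAI, hAn⟩ := Set.exists_of_ssubset (hss.ssubset_of_ne hne)
    simp only [Set.mem_iUnion, not_exists] at hAn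
    exact Set.mem_biUnion hAI hAn
  exact hBaire g hNWD hgmono hcover
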